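/- A type-3 approximation implies a type-1 approximation: if dist(0, ∂φ_λ(w)) ≤ ε/λ with φ_λ(y) = f(y) + (1/(2λ))‖y-x‖², then f(w) + (1/(2λ))‖w - x‖² ≤ ε²/(2λ) + f_λ(x). -/

import Mathlib

open RealInnerProductSpace

private lemma key_strong {H : Type*} [NormedAddCommGroup H] [InnerProductSpace ℝ H]
    (f : H → ℝ) (hconv : ConvexOn ℝ Set.univ f)
    (lam : ℝ) (hlam : 0 < lam) (x w p : H)
    (hp : ∀ y : H, f y + ‖y - x‖ ^ 2 / (2 * lam)
          ≥ f w + ‖w - x‖ ^ 2 / (2 * lam) + ⟪p, y - w⟫) (y : H) :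
    f w + ‖w - x‖ ^ 2 / (2 * lam) + ⟪p, y - w⟫ + ‖y - w‖ ^ 2 / (2 * lam)
      ≤ f y + ‖y - x‖ ^ 2 / (2 * lam) := by
  set a := w - x with ha
  set u := y - w with hu
  have step : ∀ t ∈ Set.Ioo (0:ℝ) 1,
      f w + ‖a‖ ^ 2 / (2 * lam) + ⟪p, u⟫ + (1 - t) * ‖u‖ ^ 2 / (2 * lam)
        ≤ f y + ‖y - x‖ ^ 2 / (2 * lam) := by
    intro t ht
    obtain ⟨ht0, ht1⟩ := ht
    have hz := hp (w + t • u)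
    have hconvy : f (w + t • u) ≤ (1 - t) * f w + t * f y := by
      have := hconv.2 (Set.mem_univ w) (Set.mem_univ y) (by linarith) (le_of_lt ht0)
        (by ring : (1 - t) + t = 1)
      have heq : (1 - t) • w + t • y = w + t • u := by
        rw [hu]; module
      rwa [heq] at this
    have hz1 : w + t • u - x = a + t • u := by rw [ha]; abel
    have hz2 : w + t • u - w = t • u := by abel
    have e1 : ‖a + t • u‖ ^ 2 = ‖a‖ ^ 2 + 2 * (t * ⟪a, u⟫) + t ^ 2 * ‖u‖ ^ 2 := by
      rw [@norm_add_sq_real, real_inner_smul_right, norm_smul, Real.norm_eq_abs,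
        mul_pow, sq_abs]
    have e2 : ‖y - x‖ ^ 2 = ‖a‖ ^ 2 + 2 * ⟪a, u⟫ + ‖u‖ ^ 2 := by
      have : y - x = a + u := by rw [ha, hu]; abel
      rw [this, @norm_add_sq_real]
    have e3 : ⟪p, t • u⟫ = t * ⟪p, u⟫ := real_inner_smul_right p u t
    rw [hz1, hz2, e3, e1] at hz
    rw [e2]
    have hlam' : (0:ℝ) < 2 * lam := by linarith
    have key1 : t * (f w + ⟪p, u⟫ - (2 * ⟪a, u⟫ + t * ‖u‖ ^ 2) / (2 * lam)) ≤ t * f y := by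
      have e : t * (f w + ⟪p, u⟫ - (2 * ⟪a, u⟫ + t * ‖u‖ ^ 2) / (2 * lam))
          = t * f w + t * ⟪p, u⟫ - (2 * (t * ⟪a, u⟫) + t ^ 2 * ‖u‖ ^ 2) / (2 * lam) := by
        ring
      have e' : (‖a‖ ^ 2 + 2 * (t * ⟪a, u⟫) + t ^ 2 * ‖u‖ ^ 2) / (2 * lam)
          = ‖a‖ ^ 2 / (2 * lam) + (2 * (t * ⟪a, u⟫) + t ^ 2 * ‖u‖ ^ 2) / (2 * lam) := by
        ring
      rw [e]
      rw [e'] at hz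
      linarith [hz, hconvy]
    have key2 : f w + ⟪p, u⟫ - (2 * ⟪a, u⟫ + t * ‖u‖ ^ 2) / (2 * lam) ≤ f y :=
      le_of_mul_le_mul_left key1 ht0
    have e2' : (‖a‖ ^ 2 + 2 * ⟪a, u⟫ + ‖u‖ ^ 2) / (2 * lam)
        = ‖a‖ ^ 2 / (2 * lam) + (1 - t) * ‖u‖ ^ 2 / (2 * lam)
          + (2 * ⟪a, u⟫ + t * ‖u‖ ^ 2) / (2 * lam) := by ring
    linarith [key2, e2']
  -- take t → 0⁺
  set C := f w + ‖a‖ ^ 2 / (2 * lam) + ⟪p, u⟫ with hC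
  set K := ‖u‖ ^ 2 / (2 * lam) with hK
  have hlim : Filter.Tendsto (fun t : ℝ => C + (1 - t) * ‖u‖ ^ 2 / (2 * lam))
      (nhdsWithin 0 (Set.Ioi 0)) (nhds (C + K)) := by
    have hcont : Continuous (fun t : ℝ => C + (1 - t) * ‖u‖ ^ 2 / (2 * lam)) := by
      continuity
    have h0 := (hcont.tendsto 0).mono_left (nhdsWithin_le_nhds (s := Set.Ioi (0:ℝ)))
    simpa [hK] using h0
  have hev : ∀ᶠ t in nhdsWithin (0:ℝ) (Set.Ioi 0),
      C + (1 - t) * ‖u‖ ^ 2 / (2 * lam) ≤ f y + ‖y - x‖ ^ 2 / (2 * lam) := by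
    filter_upwards [Ioo_mem_nhdsGT_of_mem (Set.mem_Ico.mpr ⟨le_refl 0, one_pos⟩)] with t ht
    have := step t ht
    linarith [this]
  have := le_of_tendsto hlim hev
  calc f w + ‖w - x‖ ^ 2 / (2 * lam) + ⟪p, y - w⟫ + ‖y - w‖ ^ 2 / (2 * lam)
      = C + K := by rw [hC, hK, ha, hu]
    _ ≤ _ := this

theorem stmt_8 {H : Type*} [NormedAddCommGroup H] [InnerProductSpace ℝ H]
    [CompleteSpace H]
    (f : H → ℝ) (hconv : ConvexOn ℝ Set.univ f) (hlsc : LowerSemicontinuous f)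
    (lam ε : ℝ) (hlam : 0 < lam) (hε : 0 < ε) (x w : H)
    (hne : ({p : H | ∀ y : H,
        f y + ‖y - x‖ ^ 2 / (2 * lam)
          ≥ f w + ‖w - x‖ ^ 2 / (2 * lam) + ⟪p, y - w⟫}).Nonempty)
    (hdist : Metric.infDist (0 : H)
        {p : H | ∀ y : H,
          f y + ‖y - x‖ ^ 2 / (2 * lam)
            ≥ f w + ‖w - x‖ ^ 2 / (2 * lam) + ⟪p, y - w⟫} ≤ ε / lam) :
    f w + ‖w - x‖ ^ 2 / (2 * lam)
      ≤ ε ^ 2 / (2 * lam) + ⨅ y : H, f y + ‖y - x‖ ^ 2 / (2 * lam) := by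
  apply le_of_forall_pos_le_add
  intro η hη
  set δ : ℝ := min 1 (η / (ε + lam / 2 + 1)) with hδdef
  have hδpos : 0 < δ := lt_min one_pos (div_pos hη (by linarith))
  have hδ1 : δ ≤ 1 := min_le_left _ _
  have hδ2 : δ * (ε + lam / 2 + 1) ≤ η := by
    have h2 : δ ≤ η / (ε + lam / 2 + 1) := min_le_right _ _
    have hd : (0:ℝ) < ε + lam / 2 + 1 := by linarith
    calc δ * (ε + lam / 2 + 1) ≤ (η / (ε + lam / 2 + 1)) * (ε + lam / 2 + 1) := by
          apply mul_le_mul_of_nonneg_right h2 (le_of_lt hd)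
      _ = η := by field_simp
  -- get p with ‖p‖ < ε/lam + δ
  have hlt : Metric.infDist (0 : H)
      {p : H | ∀ y : H, f y + ‖y - x‖ ^ 2 / (2 * lam)
        ≥ f w + ‖w - x‖ ^ 2 / (2 * lam) + ⟪p, y - w⟫} < ε / lam + δ := by linarith
  rw [Metric.infDist_lt_iff hne] at hlt
  obtain ⟨p, hpS, hpd⟩ := hlt
  have hpn : ‖p‖ < ε / lam + δ := by rwa [dist_zero_left] at hpd
  have hkey := key_strong f hconv lam hlam x w p hpS
  -- lower bound for all y
  have hlb : ∀ y : H, f w + ‖w - x‖ ^ 2 / (2 * lam) - lam * ‖p‖ ^ 2 / 2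
      ≤ f y + ‖y - x‖ ^ 2 / (2 * lam) := by
    intro y
    have h1 := hkey y
    have h2 : (0:ℝ) ≤ ‖(y - w) + lam • p‖ ^ 2 := sq_nonneg _
    have h3 : ‖(y - w) + lam • p‖ ^ 2
        = ‖y - w‖ ^ 2 + 2 * (lam * ⟪y - w, p⟫) + lam ^ 2 * ‖p‖ ^ 2 := by
      rw [@norm_add_sq_real, real_inner_smul_right, norm_smul, Real.norm_eq_abs,
        mul_pow, sq_abs]
    have h4 : ⟪p, y - w⟫ = ⟪y - w, p⟫ := real_inner_comm _ _
    rw [h3] at h2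
    rw [h4] at h1
    have hlam' : (0:ℝ) < 2 * lam := by linarith
    have h2' : (0:ℝ) ≤ (‖y - w‖ ^ 2 + 2 * (lam * ⟪y - w, p⟫) + lam ^ 2 * ‖p‖ ^ 2) / (2 * lam) :=
      div_nonneg h2 hlam'.le
    have e : (‖y - w‖ ^ 2 + 2 * (lam * ⟪y - w, p⟫) + lam ^ 2 * ‖p‖ ^ 2) / (2 * lam)
        = ‖y - w‖ ^ 2 / (2 * lam) + ⟪y - w, p⟫ + lam * ‖p‖ ^ 2 / 2 := by
      field_simp
    linarith [h1, h2', e]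
  have hinf : f w + ‖w - x‖ ^ 2 / (2 * lam) - lam * ‖p‖ ^ 2 / 2
      ≤ ⨅ y : H, f y + ‖y - x‖ ^ 2 / (2 * lam) := le_ciInf hlb
  have hp2 : lam * ‖p‖ ^ 2 / 2 ≤ ε ^ 2 / (2 * lam) + η := by
    have hnn : (0:ℝ) ≤ ‖p‖ := norm_nonneg p
    have hsq : ‖p‖ ^ 2 ≤ (ε / lam + δ) ^ 2 := by nlinarith
    have hεl : ε / lam * lam = ε := by field_simp
    have : lam * (ε / lam + δ) ^ 2 / 2 = ε ^ 2 / (2 * lam) + ε * δ + lam * δ ^ 2 / 2 := by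
      field_simp; ring
    have hA := mul_le_mul_of_nonneg_left hsq hlam.le
    have hB : δ ^ 2 ≤ δ := by nlinarith [hδpos, hδ1]
    have hC := mul_le_mul_of_nonneg_left hB hlam.le
    linarith [this, hδ2, hA, hC, hδpos.le]
  linarith
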